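/- The quaternary quadratic form x² + y² + 2z² + 4w² + 2zw is primitively universal: for every positive integer n there exist integers x, y, z, w with gcd(x,y,z,w) = 1 and x² + y² + 2z² + 4w² + 2zw = n. -/
import Mathlib
set_option maxHeartbeats 1000000

def Qf (a b c d e f x y z : ℤ) : ℤ :=
  a*x^2 + b*y^2 + c*z^2 + 2*(d*x*y + e*x*z + f*y*z)

def Df (a b c d e f : ℤ) : ℤ :=
  a*b*c + 2*d*e*f - a*f^2 - b*e^2 - c*d^2

def Bf (a b c d e f u1 u2 u3 v1 v2 v3 : ℤ) : ℤ :=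
  a*u1*v1 + b*u2*v2 + c*u3*v3 + d*(u1*v2+u2*v1) + e*(u1*v3+u3*v1) + f*(u2*v3+u3*v2)

def dM (p11 p12 p13 p21 p22 p23 p31 p32 p33 : ℤ) : ℤ :=
  p11*(p22*p33 - p23*p32) - p12*(p21*p33 - p23*p31) + p13*(p21*p32 - p22*p31)

theorem Qf_transform (a b c d e f p11 p12 p13 p21 p22 p23 p31 p32 p33 x y z : ℤ) :
    Qf (Qf a b c d e f p11 p21 p31) (Qf a b c d e f p12 p22 p32) (Qf a b c d e f p13 p23 p33)
       (Bf a b c d e f p11 p21 p31 p12 p22 p32) (Bf a b c d e f p11 p21 p31 p13 p23 p33)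
       (Bf a b c d e f p12 p22 p32 p13 p23 p33) x y z
    = Qf a b c d e f (p11*x + p12*y + p13*z) (p21*x + p22*y + p23*z) (p31*x + p32*y + p33*z) := by
  simp only [Qf, Bf]; ring

theorem Df_transform (a b c d e f p11 p12 p13 p21 p22 p23 p31 p32 p33 : ℤ) :
    Df (Qf a b c d e f p11 p21 p31) (Qf a b c d e f p12 p22 p32) (Qf a b c d e f p13 p23 p33)
       (Bf a b c d e f p11 p21 p31 p12 p22 p32) (Bf a b c d e f p11 p21 p31 p13 p23 p33)
       (Bf a b c d e f p12 p22 p32 p13 p23 p33)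
    = (dM p11 p12 p13 p21 p22 p23 p31 p32 p33)^2 * Df a b c d e f := by
  simp only [Qf, Bf, Df, dM]; ring
lemma lem_one {b c f : ℤ} (hb : 1 ≤ b) (hbc : b ≤ c) (hf : 4*f^2 ≤ b^2)
    (h1 : b*c - f^2 = 1) : b = 1 ∧ c = 1 ∧ f = 0 := by
  have hbb : b*b ≤ b*c := mul_le_mul_of_nonneg_left hbc (by linarith)
  have hf2 : f^2 = 0 := by nlinarith [sq_nonneg f]
  have hf0 : f = 0 := by
    have := pow_eq_zero_iff (n := 2) (by norm_num) |>.mp hf2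
    exact this
  have hbc1 : b*c = 1 := by rw [hf0] at h1; linarith
  have hb1 : b = 1 := by nlinarith
  have hc1 : c = 1 := by nlinarith
  exact ⟨hb1, hc1, hf0⟩

lemma half_bound {x m : ℤ} (hm : 0 ≤ m) (h : 4*x^2 ≤ m^2) : 2*|x| ≤ m := by
  by_contra hc
  push_neg at hc
  nlinarith [sq_abs x, abs_nonneg x]

lemma lem_easy {a b c d e f : ℤ} (ha : 2 ≤ a) (hab : a ≤ b) (hbc : b ≤ c)
    (hd : 4*d^2 ≤ a^2) (he : 4*e^2 ≤ a^2) (hf : 4*f^2 ≤ b^2)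
    (hdef : 0 ≤ d*e*f)
    (hdet : a*b*c + 2*d*e*f - a*f^2 - b*e^2 - c*d^2 = 1) : False := by
  have h1 : 4*f^2 ≤ b*c := by nlinarith
  have h2 : 4*e^2 ≤ a*c := by nlinarith
  have h3 : 4*d^2 ≤ a*b := by nlinarith
  have h8 : 8 ≤ a*b*c := by nlinarith
  nlinarith [mul_le_mul_of_nonneg_left h1 (by linarith : (0:ℤ) ≤ a),
             mul_le_mul_of_nonneg_left h2 (by linarith : (0:ℤ) ≤ b),
             mul_le_mul_of_nonneg_left h3 (by linarith : (0:ℤ) ≤ c)]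

lemma lem_eq {a c D E F v β γ : ℤ} (ha : 2 ≤ a) (hac : a ≤ c)
    (hD0 : 0 ≤ D) (hE0 : 0 ≤ E) (hF0 : 0 ≤ F)
    (h2D : 2*D ≤ a)
    (hSa : D + E + F ≤ a)
    (hv : v^2 ≤ (c*D + E*F)^2)
    (hβ : 3*(a*c) ≤ 4*β) (hγ : 3*(a*c) ≤ 4*γ)
    (key : c = β*γ - v^2) : False := by
  have hc2 : 2 ≤ c := le_trans ha hac
  have hkey2 : 16*(c*D + E*F) ≤ 8*a*c + a^2 := by
    have am : 4*(E*F) ≤ (E+F)^2 := by nlinarith [sq_nonneg (E-F)]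
    have h3 : (E+F)^2 ≤ (a-D)^2 := by nlinarith
    have h4 : 0 ≤ (a - 2*D)*(8*c - 3*a + 2*D) :=
      mul_nonneg (by linarith) (by linarith)
    nlinarith
  have h0 : (0:ℤ) ≤ c*D + E*F := by positivity
  have hv2 : 256*v^2 ≤ (8*a*c + a^2)^2 := by
    have h1 : 0 ≤ (8*a*c + a^2 - 16*(c*D + E*F)) * (8*a*c + a^2 + 16*(c*D + E*F)) :=
      mul_nonneg (by linarith) (by nlinarith)
    nlinarith
  have hβγ : 144*((a*c)*(a*c)) ≤ 256*(β*γ) := by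
    have b1 : (0:ℤ) ≤ 3*(a*c) := by
      have := mul_pos (show (0:ℤ) < a by linarith) (show (0:ℤ) < c by linarith)
      linarith
    have := mul_le_mul hβ hγ b1 (le_trans b1 hβ)
    linarith
  have h5 : 256*c ≥ 144*((a*c)*(a*c)) - (8*a*c + a^2)^2 := by
    have e1 : 256*c = 256*(β*γ) - 256*v^2 := by rw [key]; ring
    linarith
  have e3 : 144*((a*c)*(a*c)) - (8*a*c + a^2)^2
      = 80*(a^2*c^2) - 16*(a^3*c) - a^4 := by ring
  have h6 : 16*(a^3*c) ≤ 16*(a^2*c^2) := by nlinarith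
  have h7 : a^4 ≤ a^2*c^2 := by nlinarith
  have h8 : 252*(c^2) ≤ 63*(a^2*c^2) := by
    have e4 : 63*(a^2*c^2) - 252*(c^2) = 63*(c^2)*(a^2 - 4) := by ring
    have e5 : 0 ≤ 63*(c^2)*(a^2 - 4) := mul_nonneg (by positivity) (by nlinarith)
    linarith
  have h9 : 504*c ≤ 252*(c^2) := by nlinarith
  linarith

lemma lem_lt {a b c D E F v β γ : ℤ} (ha : 2 ≤ a) (hab : a + 1 ≤ b) (hbc : b ≤ c)
    (hD0 : 0 ≤ D) (hE0 : 0 ≤ E) (hF0 : 0 ≤ F)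
    (h2D : 2*D ≤ a) (h2E : 2*E ≤ a) (h2F : 2*F ≤ b)
    (hv : v^2 ≤ (c*D + E*F)^2)
    (hβ : 3*(a*c) ≤ 4*β) (hγ : 3*(b*c) ≤ 4*γ)
    (key : c = β*γ - v^2) : False := by
  have hc2 : 2 ≤ c := by linarith
  have h0 : (0:ℤ) ≤ c*D + E*F := by positivity
  have h1 : 4*(c*D + E*F) ≤ a*(2*c + b) := by nlinarith
  have hv2 : 16*v^2 ≤ 9*(a^2*c^2) := by
    have h2 : 0 ≤ (a*(2*c+b) - 4*(c*D + E*F)) * (a*(2*c+b) + 4*(c*D + E*F)) :=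
      mul_nonneg (by linarith) (by nlinarith)
    have h3a : (2*c+b)^2 ≤ (3*c)^2 := pow_le_pow_left₀ (by linarith) (by linarith) 2
    have h3b := mul_le_mul_of_nonneg_left h3a (sq_nonneg a)
    have h3 : (a*(2*c+b))^2 ≤ 9*(a^2*c^2) := by nlinarith [h3b]
    nlinarith
  have hβγ : 9*((a*c)*(b*c)) ≤ 16*(β*γ) := by
    have b1 : (0:ℤ) ≤ 3*(a*c) := by
      have := mul_pos (show (0:ℤ) < a by linarith) (show (0:ℤ) < c by linarith)
      linarith
    have b2 : (0:ℤ) ≤ 3*(b*c) := by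
      have := mul_pos (show (0:ℤ) < b by linarith) (show (0:ℤ) < c by linarith)
      linarith
    have := mul_le_mul hβ hγ b2 (le_trans b1 hβ)
    linarith
  have h5 : 16*c ≥ 9*((a*c)*(b*c)) - 9*(a^2*c^2) := by
    have e1 : 16*c = 16*(β*γ) - 16*v^2 := by rw [key]; ring
    linarith
  have e2 : 9*((a*c)*(b*c)) - 9*(a^2*c^2) - 9*(a*c^2) = 9*(a*c^2)*(b - a - 1) := by ring
  have h6 : 0 ≤ 9*(a*c^2)*(b - a - 1) := mul_nonneg (by positivity) (by linarith)
  have h7 : 36*c ≤ 9*(a*c^2) := by nlinarith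
  linarith

theorem fix_sorted (a b c d e f : ℤ)
    (ha : 1 ≤ a) (hab : a ≤ b) (hbc : b ≤ c)
    (hd : 4*d^2 ≤ a^2) (he : 4*e^2 ≤ a^2) (hf : 4*f^2 ≤ b^2)
    (t1 : 0 ≤ a + b + 2*(d + e + f))
    (t2 : 0 ≤ a + b + 2*(-d + e - f))
    (t3 : 0 ≤ a + b + 2*(-d - e + f))
    (t4 : 0 ≤ a + b + 2*(d - e - f))
    (hdet : Df a b c d e f = 1) :
    a = 1 ∧ b = 1 ∧ c = 1 ∧ d = 0 ∧ e = 0 ∧ f = 0 := by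
  simp only [Df] at hdet
  by_cases ha2 : 2 ≤ a
  · exfalso
    have hb2 : 2 ≤ b := le_trans ha2 hab
    have hc2 : 2 ≤ c := le_trans hb2 hbc
    by_cases hdef : 0 ≤ d*e*f
    · exact lem_easy ha2 hab hbc hd he hf hdef hdet
    · push_neg at hdef
      have hd0 : d ≠ 0 := by rintro rfl; simp at hdef
      have he0 : e ≠ 0 := by rintro rfl; simp at hdef
      have hf0 : f ≠ 0 := by rintro rfl; simp at hdef
      have hS : 2*(|d| + |e| + |f|) ≤ a + b := by
        rcases hd0.lt_or_gt with hdn | hdp <;> rcases he0.lt_or_gt with hen | hep <;>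
          rcases hf0.lt_or_gt with hfn | hfp
        · rw [abs_of_neg hdn, abs_of_neg hen, abs_of_neg hfn]; linarith
        · exact absurd (mul_pos (mul_pos_of_neg_of_neg hdn hen) hfp) (by linarith)
        · exact absurd (mul_pos_of_neg_of_neg (mul_neg_of_neg_of_pos hdn hep) hfn)
            (by linarith)
        · rw [abs_of_neg hdn, abs_of_pos hep, abs_of_pos hfp]; linarith
        · exact absurd (mul_pos_of_neg_of_neg (mul_neg_of_pos_of_neg hdp hen) hfn)
            (by linarith)
        · rw [abs_of_pos hdp, abs_of_neg hen, abs_of_pos hfp]; linarith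
        · rw [abs_of_pos hdp, abs_of_pos hep, abs_of_neg hfn]; linarith
        · exact absurd (mul_pos (mul_pos hdp hep) hfp) (by linarith)
      have h2D : 2*|d| ≤ a := half_bound (by linarith) hd
      have h2E : 2*|e| ≤ a := half_bound (by linarith) he
      have h2F : 2*|f| ≤ b := half_bound (by linarith) hf
      have key : c = (a*c - e^2)*(b*c - f^2) - (c*d - e*f)^2 := by
        have h : c * (a*b*c + 2*d*e*f - a*f^2 - b*e^2 - c*d^2)
            = (a*c - e^2)*(b*c - f^2) - (c*d - e*f)^2 := by ring
        rw [hdet, mul_one] at h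
        exact h
      have hv : (c*d - e*f)^2 ≤ (c * |d| + |e| * |f|)^2 := by
        have h1 : |c*d - e*f| ≤ c * |d| + |e| * |f| := by
          calc |c*d - e*f| ≤ |c*d| + |e*f| := abs_sub _ _
            _ = c * |d| + |e| * |f| := by
                rw [abs_mul, abs_mul, abs_of_nonneg (by linarith : (0:ℤ) ≤ c)]
        calc (c*d - e*f)^2 = |c*d - e*f|^2 := (sq_abs _).symm
          _ ≤ (c * |d| + |e| * |f|)^2 := by
              exact pow_le_pow_left₀ (abs_nonneg _) h1 2
      have hβ : 3*(a*c) ≤ 4*(a*c - e^2) := by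
        have haa : a*a ≤ a*c := mul_le_mul_of_nonneg_left (le_trans hab hbc)
          (by linarith)
        nlinarith [he]
      have hγ : 3*(b*c) ≤ 4*(b*c - f^2) := by
        have hbb : b*b ≤ b*c := mul_le_mul_of_nonneg_left hbc (by linarith)
        nlinarith [hf]
      rcases eq_or_lt_of_le hab with heq | hlt
      · have hSa : |d| + |e| + |f| ≤ a := by omega
        have hγ' : 3*(a*c) ≤ 4*(b*c - f^2) := by rw [heq]; exact hγ
        exact lem_eq ha2 (le_trans hab hbc) (abs_nonneg d) (abs_nonneg e) (abs_nonneg f)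
          h2D hSa hv hβ hγ' key
      · exact lem_lt ha2 (by linarith) hbc (abs_nonneg d) (abs_nonneg e) (abs_nonneg f)
          h2D h2E h2F hv hβ hγ key
  · -- a = 1
    have ha1 : a = 1 := by omega
    subst ha1
    have hd2 : d^2 = 0 := by nlinarith [sq_nonneg d]
    have he2 : e^2 = 0 := by nlinarith [sq_nonneg e]
    have hd1 : d = 0 := pow_eq_zero_iff (n := 2) (by norm_num) |>.mp hd2
    have he1 : e = 0 := pow_eq_zero_iff (n := 2) (by norm_num) |>.mp he2
    subst hd1; subst he1
    have hbc1 : b*c - f^2 = 1 := by linarith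
    obtain ⟨hb1, hc1, hf1⟩ := lem_one hab hbc hf hbc1
    exact ⟨rfl, hb1, hc1, rfl, rfl, hf1⟩

theorem descent : ∀ (T : ℕ) (a b c d e f : ℤ),
    (a + b + c).natAbs ≤ T →
    (∀ x y z : ℤ, ¬(x = 0 ∧ y = 0 ∧ z = 0) → 0 < Qf a b c d e f x y z) →
    Df a b c d e f = 1 →
    ∀ m : ℤ, (∃ x y z : ℤ, Qf a b c d e f x y z = m) →
    ∃ p q r : ℤ, p^2 + q^2 + r^2 = m := by
  intro T
  induction T using Nat.strong_induction_on with
  | _ T IH =>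
  intro a b c d e f hT hpos hdet m hm
  have ha : 0 < a := by simpa [Qf] using hpos 1 0 0 (by simp)
  have hb : 0 < b := by simpa [Qf] using hpos 0 1 0 (by simp)
  have hc : 0 < c := by simpa [Qf] using hpos 0 0 1 (by simp)
  have step : ∀ p11 p12 p13 p21 p22 p23 p31 p32 p33 : ℤ,
      dM p11 p12 p13 p21 p22 p23 p31 p32 p33 = 1 →
      Qf a b c d e f p11 p21 p31 + Qf a b c d e f p12 p22 p32 +
        Qf a b c d e f p13 p23 p33 < a + b + c →
      ∃ p q r : ℤ, p^2 + q^2 + r^2 = m := by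
    intro p11 p12 p13 p21 p22 p23 p31 p32 p33 hdM0 htr
    have hdMu := hdM0
    simp only [dM] at hdMu
    have hcol1 : ¬(p11 = 0 ∧ p21 = 0 ∧ p31 = 0) := by
      rintro ⟨h1, h2, h3⟩; rw [h1, h2, h3] at hdMu; ring_nf at hdMu; omega
    have hcol2 : ¬(p12 = 0 ∧ p22 = 0 ∧ p32 = 0) := by
      rintro ⟨h1, h2, h3⟩; rw [h1, h2, h3] at hdMu; ring_nf at hdMu; omega
    have hcol3 : ¬(p13 = 0 ∧ p23 = 0 ∧ p33 = 0) := by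
      rintro ⟨h1, h2, h3⟩; rw [h1, h2, h3] at hdMu; ring_nf at hdMu; omega
    have ha' := hpos _ _ _ hcol1
    have hb' := hpos _ _ _ hcol2
    have hc' := hpos _ _ _ hcol3
    have hinj : ∀ x y z : ℤ, p11*x + p12*y + p13*z = 0 → p21*x + p22*y + p23*z = 0 →
        p31*x + p32*y + p33*z = 0 → x = 0 ∧ y = 0 ∧ z = 0 := by
      intro x y z h1 h2 h3
      refine ⟨?_, ?_, ?_⟩
      · linear_combination (p22*p33 - p23*p32)*h1 - (p12*p33 - p13*p32)*h2 +
          (p12*p23 - p13*p22)*h3 - x*hdMu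
      · linear_combination (-(p21*p33 - p23*p31))*h1 + (p11*p33 - p13*p31)*h2 +
          (-(p11*p23 - p13*p21))*h3 - y*hdMu
      · linear_combination (p21*p32 - p22*p31)*h1 + (-(p11*p32 - p12*p31))*h2 +
          (p11*p22 - p12*p21)*h3 - z*hdMu
    have hTlt : (Qf a b c d e f p11 p21 p31 + Qf a b c d e f p12 p22 p32 +
        Qf a b c d e f p13 p23 p33).natAbs < T := by
      have h0 : (0:ℤ) ≤ Qf a b c d e f p11 p21 p31 + Qf a b c d e f p12 p22 p32 +
          Qf a b c d e f p13 p23 p33 := by linarith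
      calc (Qf a b c d e f p11 p21 p31 + Qf a b c d e f p12 p22 p32 +
          Qf a b c d e f p13 p23 p33).natAbs
          < (a + b + c).natAbs := by
            apply Int.natAbs_lt_natAbs_of_nonneg_of_lt h0 htr
        _ ≤ T := hT
    refine IH _ hTlt (Qf a b c d e f p11 p21 p31) (Qf a b c d e f p12 p22 p32)
      (Qf a b c d e f p13 p23 p33) (Bf a b c d e f p11 p21 p31 p12 p22 p32)
      (Bf a b c d e f p11 p21 p31 p13 p23 p33) (Bf a b c d e f p12 p22 p32 p13 p23 p33)
      le_rfl ?_ ?_ m ?_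
    · intro x y z hxyz
      rw [Qf_transform]
      exact hpos _ _ _ (fun hh => hxyz (hinj x y z hh.1 hh.2.1 hh.2.2))
    · rw [Df_transform, hdM0, hdet]; norm_num
    · obtain ⟨x0, y0, z0, hx⟩ := hm
      refine ⟨(p22*p33 - p23*p32)*x0 - (p12*p33 - p13*p32)*y0 + (p12*p23 - p13*p22)*z0, -((p21*p33 - p23*p31)*x0) + (p11*p33 - p13*p31)*y0 - (p11*p23 - p13*p21)*z0, (p21*p32 - p22*p31)*x0 - (p11*p32 - p12*p31)*y0 + (p11*p22 - p12*p21)*z0, ?_⟩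
      rw [Qf_transform]
      simp only [Qf] at hx ⊢
      linear_combination (((p11*(p22*p33 - p23*p32) - p12*(p21*p33 - p23*p31) + p13*(p21*p32 - p22*p31)) + 1) *
        (a*x0^2 + b*y0^2 + c*z0^2 + 2*(d*x0*y0 + e*x0*z0 + f*y0*z0))) * hdMu + hx
  by_cases g1 : b + 2*d < 0
  · exact step 1 0 0 1 1 0 0 0 1 (by norm_num [dM]) (by simp only [Qf]; nlinarith [g1])
  by_cases g2 : b - 2*d < 0
  · exact step 1 0 0 (-1) 1 0 0 0 1 (by norm_num [dM]) (by simp only [Qf]; nlinarith [g2])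
  by_cases g3 : c + 2*e < 0
  · exact step 1 0 0 0 1 0 1 0 1 (by norm_num [dM]) (by simp only [Qf]; nlinarith [g3])
  by_cases g4 : c - 2*e < 0
  · exact step 1 0 0 0 1 0 (-1) 0 1 (by norm_num [dM]) (by simp only [Qf]; nlinarith [g4])
  by_cases g5 : a + 2*d < 0
  · exact step 1 1 0 0 1 0 0 0 1 (by norm_num [dM]) (by simp only [Qf]; nlinarith [g5])
  by_cases g6 : a - 2*d < 0
  · exact step 1 (-1) 0 0 1 0 0 0 1 (by norm_num [dM]) (by simp only [Qf]; nlinarith [g6])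
  by_cases g7 : c + 2*f < 0
  · exact step 1 0 0 0 1 0 0 1 1 (by norm_num [dM]) (by simp only [Qf]; nlinarith [g7])
  by_cases g8 : c - 2*f < 0
  · exact step 1 0 0 0 1 0 0 (-1) 1 (by norm_num [dM]) (by simp only [Qf]; nlinarith [g8])
  by_cases g9 : a + 2*e < 0
  · exact step 1 0 1 0 1 0 0 0 1 (by norm_num [dM]) (by simp only [Qf]; nlinarith [g9])
  by_cases g10 : a - 2*e < 0
  · exact step 1 0 (-1) 0 1 0 0 0 1 (by norm_num [dM]) (by simp only [Qf]; nlinarith [g10])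
  by_cases g11 : b + 2*f < 0
  · exact step 1 0 0 0 1 1 0 0 1 (by norm_num [dM]) (by simp only [Qf]; nlinarith [g11])
  by_cases g12 : b - 2*f < 0
  · exact step 1 0 0 0 1 (-1) 0 0 1 (by norm_num [dM]) (by simp only [Qf]; nlinarith [g12])
  by_cases g13 : b + c + 2*(1*d + 1*e + 1*f) < 0
  · exact step 1 0 0 1 1 0 1 0 1 (by norm_num [dM]) (by simp only [Qf]; nlinarith [g13])
  by_cases g14 : b + c + 2*(1*d + -1*e + -1*f) < 0
  · exact step 1 0 0 1 1 0 (-1) 0 1 (by norm_num [dM]) (by simp only [Qf]; nlinarith [g14])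
  by_cases g15 : b + c + 2*(-1*d + 1*e + -1*f) < 0
  · exact step 1 0 0 (-1) 1 0 1 0 1 (by norm_num [dM]) (by simp only [Qf]; nlinarith [g15])
  by_cases g16 : b + c + 2*(-1*d + -1*e + 1*f) < 0
  · exact step 1 0 0 (-1) 1 0 (-1) 0 1 (by norm_num [dM]) (by simp only [Qf]; nlinarith [g16])
  by_cases g17 : a + c + 2*(1*d + 1*e + 1*f) < 0
  · exact step 1 1 0 0 1 0 0 1 1 (by norm_num [dM]) (by simp only [Qf]; nlinarith [g17])
  by_cases g18 : a + c + 2*(1*d + -1*e + -1*f) < 0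
  · exact step 1 1 0 0 1 0 0 (-1) 1 (by norm_num [dM]) (by simp only [Qf]; nlinarith [g18])
  by_cases g19 : a + c + 2*(-1*d + -1*e + 1*f) < 0
  · exact step 1 (-1) 0 0 1 0 0 1 1 (by norm_num [dM]) (by simp only [Qf]; nlinarith [g19])
  by_cases g20 : a + c + 2*(-1*d + 1*e + -1*f) < 0
  · exact step 1 (-1) 0 0 1 0 0 (-1) 1 (by norm_num [dM]) (by simp only [Qf]; nlinarith [g20])
  by_cases g21 : a + b + 2*(1*d + 1*e + 1*f) < 0
  · exact step 1 0 1 0 1 1 0 0 1 (by norm_num [dM]) (by simp only [Qf]; nlinarith [g21])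
  by_cases g22 : a + b + 2*(-1*d + 1*e + -1*f) < 0
  · exact step 1 0 1 0 1 (-1) 0 0 1 (by norm_num [dM]) (by simp only [Qf]; nlinarith [g22])
  by_cases g23 : a + b + 2*(-1*d + -1*e + 1*f) < 0
  · exact step 1 0 (-1) 0 1 1 0 0 1 (by norm_num [dM]) (by simp only [Qf]; nlinarith [g23])
  by_cases g24 : a + b + 2*(1*d + -1*e + -1*f) < 0
  · exact step 1 0 (-1) 0 1 (-1) 0 0 1 (by norm_num [dM]) (by simp only [Qf]; nlinarith [g24])

  push_neg at g1 g2 g3 g4 g5 g6 g7 g8 g9 g10 g11 g12 g13 g14 g15 g16 g17 g18 g19 g20 g21 g22 g23 g24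
  have ha1 : 1 ≤ a := ha
  have hb1 : 1 ≤ b := hb
  have hc1 : 1 ≤ c := hc
  have pda : 4*d^2 ≤ a^2 := by nlinarith [mul_nonneg g5 g6]
  have pdb : 4*d^2 ≤ b^2 := by nlinarith [mul_nonneg g1 g2]
  have pea : 4*e^2 ≤ a^2 := by nlinarith [mul_nonneg g9 g10]
  have pec : 4*e^2 ≤ c^2 := by nlinarith [mul_nonneg g3 g4]
  have pfb : 4*f^2 ≤ b^2 := by nlinarith [mul_nonneg g11 g12]
  have pfc : 4*f^2 ≤ c^2 := by nlinarith [mul_nonneg g7 g8]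
  have conclude : a = 1 → b = 1 → c = 1 → d = 0 → e = 0 → f = 0 →
      ∃ p q r : ℤ, p^2 + q^2 + r^2 = m := by
    intro h1 h2 h3 h4 h5 h6
    subst h1; subst h2; subst h3; subst h4; subst h5; subst h6
    obtain ⟨x0, y0, z0, hx⟩ := hm
    refine ⟨x0, y0, z0, ?_⟩
    simp only [Qf] at hx
    linarith
  rcases le_total a b with hab | hab <;> rcases le_total b c with hbc | hbc <;>
    rcases le_total a c with hac | hac
  · obtain ⟨h1,h2,h3,h4,h5,h6⟩ := fix_sorted a b c d e f ha1 hab hbc pda pea pfb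
      (by linarith [g21]) (by linarith [g22]) (by linarith [g23]) (by linarith [g24]) hdet
    exact conclude h1 h2 h3 h4 h5 h6
  · obtain ⟨h1,h2,h3,h4,h5,h6⟩ := fix_sorted a b c d e f ha1 hab hbc pda pea pfb
      (by linarith [g21]) (by linarith [g22]) (by linarith [g23]) (by linarith [g24]) hdet
    exact conclude h1 h2 h3 h4 h5 h6
  · obtain ⟨h1,h2,h3,h4,h5,h6⟩ := fix_sorted a c b e d f ha1 hac hbc pea pda pfc
      (by linarith [g17]) (by linarith [g18]) (by linarith [g19]) (by linarith [g20])
      (by simp only [Df] at hdet ⊢; linarith)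
    exact conclude h1 h3 h2 h5 h4 h6
  · obtain ⟨h1,h2,h3,h4,h5,h6⟩ := fix_sorted c a b e f d hc1 hac hab pec pfc pda
      (by linarith [g17]) (by linarith [g19]) (by linarith [g18]) (by linarith [g20])
      (by simp only [Df] at hdet ⊢; linarith)
    exact conclude h2 h3 h1 h6 h4 h5
  · obtain ⟨h1,h2,h3,h4,h5,h6⟩ := fix_sorted b a c d f e hb1 hab hac pdb pfb pea
      (by linarith [g21]) (by linarith [g23]) (by linarith [g22]) (by linarith [g24])
      (by simp only [Df] at hdet ⊢; linarith)
    exact conclude h2 h1 h3 h4 h6 h5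
  · obtain ⟨h1,h2,h3,h4,h5,h6⟩ := fix_sorted b c a f d e hb1 hbc hac pfb pdb pec
      (by linarith [g13]) (by linarith [g14]) (by linarith [g15]) (by linarith [g16])
      (by simp only [Df] at hdet ⊢; linarith)
    exact conclude h3 h1 h2 h5 h6 h4
  · obtain ⟨h1,h2,h3,h4,h5,h6⟩ := fix_sorted c b a f e d hc1 hbc hab pfc pec pdb
      (by linarith [g13]) (by linarith [g15]) (by linarith [g14]) (by linarith [g16])
      (by simp only [Df] at hdet ⊢; linarith)
    exact conclude h3 h2 h1 h6 h5 h4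
  · obtain ⟨h1,h2,h3,h4,h5,h6⟩ := fix_sorted c b a f e d hc1 hbc hab pfc pec pdb
      (by linarith [g13]) (by linarith [g15]) (by linarith [g14]) (by linarith [g16])
      (by simp only [Df] at hdet ⊢; linarith)
    exact conclude h3 h2 h1 h6 h5 h4

theorem three_squares_of_certificate (N k r s : ℤ) (hN : 2 ≤ N) (hk : 1 ≤ k) (hr : 1 ≤ r)
    (hcert : N*(r*k - s^2) = r + 1) :
    ∃ p q t : ℤ, p^2 + q^2 + t^2 = N := by
  have hP : 1 ≤ N*k - 1 := by nlinarith
  have key : ∀ x y z : ℤ, (N*k-1)*(N*(Qf N k r 1 0 (-s) x y z))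
      = (N*k-1)*(N*x+y)^2 + ((N*k-1)*y - N*s*z)^2 + N*z^2 := by
    intro x y z
    simp only [Qf]
    linear_combination (N*z^2)*hcert
  apply descent ((N + k + r).natAbs) N k r 1 0 (-s) le_rfl ?_ ?_ N ⟨1, 0, 0, by simp [Qf]⟩
  · intro x y z hxyz
    rcases lt_or_ge 0 (Qf N k r 1 0 (-s) x y z) with h | h
    · exact h
    exfalso
    have t1 : 0 ≤ (N*k-1)*(N*x+y)^2 := mul_nonneg (by linarith) (sq_nonneg _)
    have t2 : 0 ≤ ((N*k-1)*y - N*s*z)^2 := sq_nonneg _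
    have t3 : 0 ≤ N*z^2 := mul_nonneg (by linarith) (sq_nonneg _)
    have hL : (N*k-1)*(N*(Qf N k r 1 0 (-s) x y z)) ≤ 0 := by
      have h1 : N*(Qf N k r 1 0 (-s) x y z) ≤ 0 :=
        mul_nonpos_of_nonneg_of_nonpos (by linarith) h
      exact mul_nonpos_of_nonneg_of_nonpos (by linarith) h1
    have hz2 : N*z^2 = 0 := by linarith [key x y z]
    have hz : z = 0 := by
      have : z^2 = 0 := by
        rcases mul_eq_zero.mp hz2 with h' | h'
        · linarith
        · exact h'
      exact pow_eq_zero_iff (n := 2) (by norm_num) |>.mp this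
    subst hz
    have hy2 : ((N*k-1)*y - N*s*0)^2 = 0 := by linarith [key x y 0]
    have hy : y = 0 := by
      have h' : (N*k-1)*y - N*s*0 = 0 := pow_eq_zero_iff (n := 2) (by norm_num) |>.mp hy2
      have h'' : (N*k-1)*y = 0 := by linarith
      rcases mul_eq_zero.mp h'' with h3 | h3
      · linarith
      · exact h3
    subst hy
    have hx2 : (N*k-1)*(N*x+0)^2 = 0 := by linarith [key x 0 0]
    have hx : x = 0 := by
      rcases mul_eq_zero.mp hx2 with h3 | h3
      · linarith
      · have h4 : N*x + 0 = 0 := pow_eq_zero_iff (n := 2) (by norm_num) |>.mp h3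
        have h5 : N*x = 0 := by linarith
        rcases mul_eq_zero.mp h5 with h6 | h6
        · linarith
        · exact h6
    exact hxyz ⟨hx, rfl, rfl⟩
  · simp only [Df]
    linear_combination hcert

open scoped NumberTheorySymbols

lemma cop_pred {N : ℕ} (h : 1 ≤ N) : Nat.Coprime (N-1) N := by
  have e : N = 1 + (N-1) := by omega
  have h2 := Nat.coprime_add_self_right (m := N-1) (n := 1)
  rw [← e] at h2
  exact h2.mpr (Nat.coprime_one_right _)

lemma certificate_case1 (N : ℕ) (hodd : N % 2 = 1) (hN3 : 3 ≤ N) (h4 : N % 4 = 1) :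
    ∃ k r s : ℤ, 1 ≤ k ∧ 1 ≤ r ∧ (N:ℤ)*(r*k - s^2) = r + 1 := by
  have hNodd : Odd N := Nat.odd_iff.mpr hodd
  haveI : NeZero (4*N) := ⟨by omega⟩
  -- coprimality of 2N-1 with 4N
  have c1 : Nat.Coprime (2*N-1) N := by
    rw [Nat.coprime_comm]
    have e1 : 2*N-1 = (N-1) + N*1 := by omega
    rw [e1, Nat.coprime_add_mul_left_right]
    exact (cop_pred (by omega)).symm
  have c4 : Nat.Coprime (2*N-1) 4 := by
    have h2 : Nat.Coprime (2*N-1) 2 := by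
      rw [Nat.coprime_comm]
      exact (Nat.Prime.coprime_iff_not_dvd Nat.prime_two).mpr (by omega)
    have : (4:ℕ) = 2^2 := by norm_num
    rw [this]
    exact Nat.Coprime.pow_right _ h2
  have hcop : Nat.Coprime (2*N-1) (4*N) := Nat.Coprime.mul_right c4 c1
  obtain ⟨p, hpgt, hpp, hpmod⟩ := Nat.forall_exists_prime_gt_and_eq_mod
    (q := 4*N) (a := ((2*N-1 : ℕ) : ZMod (4*N)))
    ((ZMod.isUnit_iff_coprime _ _).mpr hcop) (4*N+2)
  haveI fp : Fact p.Prime := ⟨hpp⟩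
  have hme : p ≡ (2*N-1) [MOD 4*N] := (ZMod.natCast_eq_natCast_iff _ _ _).mp hpmod
  -- p % 4 = 1
  have hp4 : p % 4 = 1 := by
    have h4d : p ≡ (2*N-1) [MOD 4] := hme.of_dvd ⟨N, rfl⟩
    have := h4d  -- p % 4 = (2N-1) % 4
    unfold Nat.ModEq at this
    omega
  have hp2 : p % 2 = 1 := by omega
  have hpodd : Odd p := Nat.odd_iff.mpr hp2
  -- N ∣ p + 1
  obtain ⟨c, hc⟩ := hme.dvd
  have hcast : ((2*N-1 : ℕ) : ℤ) = 2*(N:ℤ) - 1 := by push_cast [Nat.cast_sub (by omega : 1 ≤ 2*N)]; ring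
  have hD : (p:ℤ) + 1 = (N:ℤ)*(2 - 4*c) := by
    rw [hcast] at hc
    push_cast at hc ⊢
    linarith
  set D : ℤ := 2 - 4*c with hDdef
  have hD1 : 1 ≤ D := by
    by_contra h0
    push_neg at h0
    have hp0 : (0:ℤ) < (p:ℤ) + 1 := by
      have := hpp.pos
      omega
    nlinarith [hD]
  -- Jacobi symbol computations
  have hND : J((N:ℤ)*D | p) = 1 := by
    have h1 : ((N:ℤ)*D) % p = 1 % p := by
      have e : (N:ℤ)*D = (p:ℤ) * 1 + 1 := by linarith [hD]
      rw [e]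
      simp [Int.add_mul_emod_self_left]
    rw [jacobiSym.mod_left' h1, jacobiSym.one_left]
  have hgcdN : Int.gcd (N:ℤ) p = 1 := by
    have hnd : ¬ (p ∣ N) := fun hdl => absurd (Nat.le_of_dvd (by omega) hdl) (by omega)
    have hcp : Nat.Coprime p N := (Nat.Prime.coprime_iff_not_dvd hpp).mpr hnd
    simpa [Int.gcd_natCast_natCast] using hcp.symm
  have hJN : J((N:ℤ) | p) = 1 := by
    have hrec := jacobiSym.quadratic_reciprocity_one_mod_four hp4 hNodd
    have h2 : ((p:ℤ)) % N = (-1) % N := by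
      have hmq : (p:ℤ) ≡ -1 [ZMOD (N:ℤ)] := Int.modEq_iff_dvd.mpr ⟨-D, by linarith [hD]⟩
      exact hmq
    have h3 : J((p:ℤ) | N) = J(-1 | N) := jacobiSym.mod_left' h2
    rw [jacobiSym.at_neg_one hNodd, ZMod.χ₄_nat_one_mod_four h4] at h3
    rw [← hrec, h3]
  have hJD : J(D | p) = 1 := by
    have hm := jacobiSym.mul_left (N:ℤ) D p
    rw [hND, hJN, one_mul] at hm
    exact hm.symm
  have hJnegD : J(-D | p) = 1 := by
    have h1 : J((-1) * D | p) = J(-1 | p) * J(D | p) := jacobiSym.mul_left _ _ _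
    rw [jacobiSym.at_neg_one hpodd, ZMod.χ₄_nat_one_mod_four hp4, hJD] at h1
    simpa using h1
  -- extract square root
  have hleg : legendreSym p (-D) = 1 := by rw [jacobiSym.legendreSym.to_jacobiSym]; exact hJnegD
  have hnz : ((-D : ℤ) : ZMod p) ≠ 0 := by
    intro h0
    have := (legendreSym.eq_zero_iff p (-D)).mpr h0
    omega
  obtain ⟨σ, hσ⟩ := (legendreSym.eq_one_iff p hnz).mp hleg
  set s : ℤ := (σ.val : ℤ) with hsdef
  have hs : ((s : ℤ) : ZMod p) = σ := by
    rw [hsdef]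
    push_cast
    rw [ZMod.natCast_val, ZMod.cast_id]
  have hdvd : (p:ℤ) ∣ s^2 + D := by
    rw [← ZMod.intCast_zmod_eq_zero_iff_dvd]
    push_cast
    rw [hs]
    have hσ' : ((D:ℤ) : ZMod p) = -(σ * σ) := by
      push_cast at hσ
      linear_combination -hσ
    push_cast at hσ'
    rw [hσ']
    ring
  obtain ⟨k, hk⟩ := hdvd
  refine ⟨k, p, s, ?_, ?_, ?_⟩
  · by_contra hk0
    push_neg at hk0
    have hs2 : (0:ℤ) ≤ s^2 := sq_nonneg s
    have hp0 : (0:ℤ) < p := by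
      have := hpp.pos
      omega
    nlinarith [hk]
  · have := hpp.pos
    omega
  · have h5 : (p:ℤ)*k - s^2 = D := by linarith [hk]
    rw [h5]
    linarith [hD]

lemma certificate_case2 (N : ℕ) (hodd : N % 2 = 1) (hN3 : 3 ≤ N) (h83 : N % 8 = 3) :
    ∃ k r s : ℤ, 1 ≤ k ∧ 1 ≤ r ∧ (N:ℤ)*(r*k - s^2) = r + 1 := by
  have hNodd : Odd N := Nat.odd_iff.mpr hodd
  haveI : NeZero N := ⟨by omega⟩
  set A : ℕ := (N-1)/2 with hAdef
  have hA2 : 2*A = N-1 := by omega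
  have hcopA : Nat.Coprime A N :=
    Nat.Coprime.coprime_dvd_left ⟨2, by omega⟩ (cop_pred (by omega))
  obtain ⟨p, hpgt, hpp, hpmod⟩ := Nat.forall_exists_prime_gt_and_eq_mod
    (q := N) (a := ((A : ℕ) : ZMod N)) ((ZMod.isUnit_iff_coprime _ _).mpr hcopA) (2*N+2)
  haveI fp : Fact p.Prime := ⟨hpp⟩
  have hme : p ≡ A [MOD N] := (ZMod.natCast_eq_natCast_iff _ _ _).mp hpmod
  have hpodd : Odd p := hpp.odd_of_ne_two (by omega)
  have hp2 : p % 2 = 1 := Nat.odd_iff.mp hpodd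
  obtain ⟨c, hc⟩ := hme.dvd
  have hAcast : 2*((A:ℕ):ℤ) = (N:ℤ) - 1 := by
    have : ((2*A : ℕ) : ℤ) = ((N-1 : ℕ) : ℤ) := by rw [hA2]
    push_cast [Nat.cast_sub (by omega : 1 ≤ N)] at this
    linarith
  have hD : 2*(p:ℤ) + 1 = (N:ℤ)*(1 - 2*c) := by
    push_cast at hc
    linarith
  set D : ℤ := 1 - 2*c with hDdef
  have hp0 : (0:ℤ) < p := by exact_mod_cast hpp.pos
  have hD1 : 1 ≤ D := by
    by_contra h0
    push_neg at h0
    nlinarith [hD]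
  -- Jacobi computations
  have hND : J((N:ℤ)*D | p) = 1 := by
    have h1 : ((N:ℤ)*D) % p = 1 % p := by
      have e : (N:ℤ)*D = 1 + (p:ℤ) * 2 := by linarith [hD]
      rw [e]
      simp [Int.add_mul_emod_self_left]
    rw [jacobiSym.mod_left' h1, jacobiSym.one_left]
  have hgcdN : Int.gcd (N:ℤ) p = 1 := by
    have hnd : ¬ (p ∣ N) := fun hdl => absurd (Nat.le_of_dvd (by omega) hdl) (by omega)
    have hcp : Nat.Coprime p N := (Nat.Prime.coprime_iff_not_dvd hpp).mpr hnd
    simpa [Int.gcd_natCast_natCast] using hcp.symm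
  have hJD : J(D | p) = J((N:ℤ) | p) := by
    have hsq : J((N:ℤ)|p)^2 = 1 := jacobiSym.sq_one hgcdN
    have hm := jacobiSym.mul_left (N:ℤ) D p
    rw [hND] at hm
    calc J(D|p) = (J((N:ℤ)|p)^2) * J(D|p) := by rw [hsq]; ring
      _ = J((N:ℤ)|p) * (J((N:ℤ)|p) * J(D|p)) := by ring
      _ = J((N:ℤ)|p) := by rw [← hm, mul_one]
  have hrec := jacobiSym.quadratic_reciprocity hNodd hpodd
  have hchi4p : (ZMod.χ₄ p : ℤ) = (-1)^(p/2) := ZMod.χ₄_eq_neg_one_pow hp2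
  have hJnegD : J(-D | p) = J((p:ℤ) | N) := by
    have h1 : J((-1)*D|p) = J(-1|p)*J(D|p) := jacobiSym.mul_left _ _ _
    rw [jacobiSym.at_neg_one hpodd, hJD, hrec, hchi4p] at h1
    have hNeven : (-1:ℤ)^(p/2) * ((-1:ℤ)^(N/2 * (p/2))) = 1 := by
      rw [← pow_add]
      apply Even.neg_one_pow
      have heq : p/2 + N/2 * (p/2) = (p/2)*(1 + N/2) := by ring
      rw [heq]
      have hev : Even (1 + N/2) := Nat.even_iff.mpr (by omega)
      exact hev.mul_left _
    have h2 : J((-1)*D|p) = ((-1:ℤ)^(p/2) * ((-1:ℤ)^(N/2 * (p/2)))) * J((p:ℤ)|N) := by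
      rw [h1]; ring
    rw [hNeven, one_mul] at h2
    rw [← neg_one_mul]
    exact h2
  have hJpN : J((p:ℤ) | N) = 1 := by
    have h2 : J((p:ℤ)|N) = J((A:ℤ)|N) :=
      jacobiSym.mod_left' (Int.modEq_iff_dvd.mpr ⟨c, by push_cast; linarith [hc]⟩)
    have h3 : J((2:ℤ)*A|N) = J(-1|N) :=
      jacobiSym.mod_left' (Int.modEq_iff_dvd.mpr ⟨-1, by push_cast; linarith [hAcast]⟩)
    have h4 : J((2:ℤ)*A|N) = J(2|N) * J((A:ℤ)|N) := jacobiSym.mul_left _ _ _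
    have h5 : J((2:ℤ)|N) = ZMod.χ₈ N := jacobiSym.at_two hNodd
    have hχ8 : (ZMod.χ₈ N : ℤ) = -1 := by
      rw [ZMod.χ₈_nat_eq_if_mod_eight]
      rw [if_neg (by omega), if_neg (by omega)]
    have hχ4 : (ZMod.χ₄ N : ℤ) = -1 := ZMod.χ₄_nat_three_mod_four (by omega)
    have h6 : J((-1:ℤ)|N) = ZMod.χ₄ N := jacobiSym.at_neg_one hNodd
    have h7 : J(2|N)*J((A:ℤ)|N) = -1 := by rw [← h4, h3, h6, hχ4]
    rw [h5, hχ8] at h7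
    rw [h2]
    linarith
  rw [hJpN] at hJnegD
  -- extract square root mod p
  have hleg : legendreSym p (-D) = 1 := by
    rw [jacobiSym.legendreSym.to_jacobiSym]; exact hJnegD
  have hnz : ((-D : ℤ) : ZMod p) ≠ 0 := by
    intro h0
    have := (legendreSym.eq_zero_iff p (-D)).mpr h0
    omega
  obtain ⟨σ, hσ⟩ := (legendreSym.eq_one_iff p hnz).mp hleg
  set s0 : ℤ := (σ.val : ℤ) with hs0def
  have hs0 : ((s0 : ℤ) : ZMod p) = σ := by
    rw [hs0def]; push_cast; rw [ZMod.natCast_val, ZMod.cast_id]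
  set s : ℤ := if Even (s0 + D) then s0 else s0 + p with hsdef
  have hscast : ((s : ℤ) : ZMod p) = σ := by
    rw [hsdef]
    by_cases h : Even (s0 + D)
    · rw [if_pos h]; exact hs0
    · rw [if_neg h]; push_cast; rw [hs0, ZMod.natCast_self]; ring
  have hpar : Even (s + D) := by
    rw [hsdef]
    by_cases h : Even (s0 + D)
    · rw [if_pos h]; exact h
    · rw [if_neg h]
      rw [Int.even_iff] at h ⊢
      have hpz : ((p:ℤ)) % 2 = 1 := by omega
      omega
  have hdvdp : (p:ℤ) ∣ s^2 + D := by
    rw [← ZMod.intCast_zmod_eq_zero_iff_dvd]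
    push_cast
    rw [hscast]
    have hσ' : ((D:ℤ) : ZMod p) = -(σ * σ) := by
      push_cast at hσ
      linear_combination -hσ
    push_cast at hσ'
    rw [hσ']
    ring
  have hdvd2 : (2:ℤ) ∣ s^2 + D := by
    have hs2 : s^2 % 2 = s % 2 := by
      rcases Int.even_or_odd s with ⟨u, hu⟩ | ⟨u, hu⟩
      · have h1 : s^2 = 4*u^2 := by rw [hu]; ring
        rw [h1, hu]
        generalize u^2 = m
        omega
      · have h1 : s^2 = 4*u^2 + 4*u + 1 := by rw [hu]; ring
        rw [h1, hu]
        generalize u^2 = m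
        omega
    rw [Int.even_iff] at hpar
    have : (s^2 + D) % 2 = 0 := by omega
    exact Int.dvd_of_emod_eq_zero this
  obtain ⟨t, ht⟩ := hdvdp
  have h2t : (2:ℤ) ∣ t := by
    have h2pt : (2:ℤ) ∣ (p:ℤ) * t := ht ▸ hdvd2
    rcases (Int.prime_two.dvd_mul.mp h2pt) with h | h
    · exfalso
      have : (2:ℕ) ∣ p := Int.ofNat_dvd.mp (by exact_mod_cast h)
      omega
    · exact h
  obtain ⟨k, hkt⟩ := h2t
  refine ⟨k, 2*p, s, ?_, by omega, ?_⟩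
  · by_contra hk0
    push_neg at hk0
    nlinarith [ht, hkt, sq_nonneg s]
  · have h5 : (2*(p:ℤ))*k - s^2 = D := by
      rw [hkt] at ht
      linarith [ht]
    push_cast
    rw [h5]
    linarith [hD]


theorem three_squares (N : ℕ) (h2 : N % 2 = 1) (h8 : N % 8 ≠ 7) :
    ∃ a b t : ℤ, a^2 + b^2 + t^2 = (N:ℤ) := by
  by_cases h1 : N = 1
  · subst h1; exact ⟨1, 0, 0, by norm_num⟩
  · have hN3 : 3 ≤ N := by omega
    have hN2 : 2 ≤ (N:ℤ) := by exact_mod_cast (by omega : 2 ≤ N)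
    have hcases : N % 4 = 1 ∨ N % 8 = 3 := by omega
    obtain ⟨k, r, s, hk, hr, hcert⟩ :=
      hcases.elim (fun h => certificate_case1 N h2 hN3 h)
        (fun h => certificate_case2 N h2 hN3 h)
    exact three_squares_of_certificate (N:ℤ) k r s hN2 hk hr hcert

lemma branch_w1 (n : ℕ) (a b t x y z : ℤ)
    (hab : a + b = 2*x) (hab2 : a - b = 2*y) (ht : t = 2*z + 1)
    (habt : a^2 + b^2 + t^2 = 2*(n:ℤ) - 7) :
    ∃ X Y Z W : ℤ, Int.gcd X (Int.gcd Y (Int.gcd Z W)) = 1 ∧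
      X ^ 2 + Y ^ 2 + 2 * Z ^ 2 + 4 * W ^ 2 + 2 * Z * W = (n : ℤ) := by
  have ea : a = x + y := by linarith
  have eb : b = x - y := by linarith
  subst ea; subst ht
  refine ⟨x, y, z, 1, ?_, ?_⟩
  · simp [Int.gcd]
  · have h2 : (2:ℤ) * (x ^ 2 + y ^ 2 + 2 * z ^ 2 + 4 * 1 ^ 2 + 2 * z * 1) = 2 * (n:ℤ) := by
      have hb' : b = x - y := eb
      subst hb'
      linear_combination habt
    have := mul_left_cancel₀ (by norm_num : (2:ℤ) ≠ 0) h2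
    linarith [this]

lemma branch_z1 (n : ℕ) (a b x y w : ℤ)
    (ha : a = 2*x) (hb : b = 2*y)
    (habt : a^2 + b^2 + (4*w+1)^2 = 4*(n:ℤ) - 7) :
    ∃ X Y Z W : ℤ, Int.gcd X (Int.gcd Y (Int.gcd Z W)) = 1 ∧
      X ^ 2 + Y ^ 2 + 2 * Z ^ 2 + 4 * W ^ 2 + 2 * Z * W = (n : ℤ) := by
  subst ha; subst hb
  refine ⟨x, y, 1, w, ?_, ?_⟩
  · simp [Int.gcd]
  · have h4 : (4:ℤ) * (x ^ 2 + y ^ 2 + 2 * 1 ^ 2 + 4 * w ^ 2 + 2 * 1 * w) = 4 * (n:ℤ) := by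
      linear_combination habt
    have := mul_left_cancel₀ (by norm_num : (4:ℤ) ≠ 0) h4
    linarith [this]

theorem stmt_7 (n : ℕ) (hn : 0 < n) :
    ∃ x y z w : ℤ, Int.gcd x (Int.gcd y (Int.gcd z w)) = 1 ∧
      x ^ 2 + y ^ 2 + 2 * z ^ 2 + 4 * w ^ 2 + 2 * z * w = (n : ℤ) := by
  by_cases h1 : n = 1
  · exact ⟨1, 0, 0, 0, by simp [Int.gcd], by simp [h1]⟩
  by_cases h2 : n = 2
  · refine ⟨0, 0, 1, 0, ?_, by simp [h2]⟩
    simp [Int.gcd]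
  by_cases hm : n % 4 = 3
  · -- z = 1 branch, N = 4n - 7
    have hn3 : 3 ≤ n := by omega
    have hN2 : (4*n-7) % 2 = 1 := by omega
    have hN8 : (4*n-7) % 8 ≠ 7 := by omega
    obtain ⟨a, b, t, habt⟩ := three_squares (4*n-7) hN2 hN8
    have hcast : ((4*n-7 : ℕ) : ℤ) = 4*(n:ℤ) - 7 := by push_cast [Nat.cast_sub (by omega : 7 ≤ 4*n)]; ring
    rw [hcast] at habt
    -- parity analysis
    rcases Int.even_or_odd a with ⟨u, hu⟩ | ⟨u, hu⟩ <;>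
      rcases Int.even_or_odd b with ⟨v, hv⟩ | ⟨v, hv⟩ <;>
      rcases Int.even_or_odd t with ⟨m, hm'⟩ | ⟨m, hm'⟩
    · -- e e e : contradiction
      exfalso
      have e1 : a^2 = 4*u^2 := by rw [hu]; ring
      have e2 : b^2 = 4*v^2 := by rw [hv]; ring
      have e3 : t^2 = 4*m^2 := by rw [hm']; ring
      rw [e1, e2, e3] at habt
      generalize u^2 = U at habt; generalize v^2 = V at habt; generalize m^2 = M at habt
      omega
    · -- e e o : good, t odd
      have e1 : a = 2*u := by linarith
      have e2 : b = 2*v := by linarith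
      obtain ⟨w, hw⟩ : ∃ w : ℤ, t^2 = (4*w+1)^2 := by
        rcases Int.even_or_odd m with ⟨w, hw⟩ | ⟨w, hw⟩
        · exact ⟨w, by rw [hm', hw]; ring⟩
        · exact ⟨-w-1, by rw [hm', hw]; ring⟩
      rw [hw] at habt
      exact branch_z1 n a b u v w e1 e2 habt
    · -- e o e : b odd
      have e1 : a = 2*u := by linarith
      have e3 : t = 2*m := by linarith
      obtain ⟨w, hw⟩ : ∃ w : ℤ, b^2 = (4*w+1)^2 := by
        rcases Int.even_or_odd v with ⟨w, hw⟩ | ⟨w, hw⟩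
        · exact ⟨w, by rw [hv, hw]; ring⟩
        · exact ⟨-w-1, by rw [hv, hw]; ring⟩
      have habt' : a^2 + t^2 + (4*w+1)^2 = 4*(n:ℤ) - 7 := by rw [← hw]; linarith
      exact branch_z1 n a t u m w e1 e3 habt'
    · -- e o o : contradiction
      exfalso
      have e1 : a^2 = 4*u^2 := by rw [hu]; ring
      have e2 : b^2 = 4*v^2 + 4*v + 1 := by rw [hv]; ring
      have e3 : t^2 = 4*m^2 + 4*m + 1 := by rw [hm']; ring
      rw [e1, e2, e3] at habt
      generalize u^2 = U at habt; generalize v^2 = V at habt; generalize m^2 = M at habt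
      omega
    · -- o e e : a odd
      have e2 : b = 2*v := by linarith
      have e3 : t = 2*m := by linarith
      obtain ⟨w, hw⟩ : ∃ w : ℤ, a^2 = (4*w+1)^2 := by
        rcases Int.even_or_odd u with ⟨w, hw⟩ | ⟨w, hw⟩
        · exact ⟨w, by rw [hu, hw]; ring⟩
        · exact ⟨-w-1, by rw [hu, hw]; ring⟩
      have habt' : b^2 + t^2 + (4*w+1)^2 = 4*(n:ℤ) - 7 := by rw [← hw]; linarith
      exact branch_z1 n b t v m w e2 e3 habt'
    · -- o e o : contradiction
      exfalso
      have e1 : a^2 = 4*u^2 + 4*u + 1 := by rw [hu]; ring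
      have e2 : b^2 = 4*v^2 := by rw [hv]; ring
      have e3 : t^2 = 4*m^2 + 4*m + 1 := by rw [hm']; ring
      rw [e1, e2, e3] at habt
      generalize u^2 = U at habt; generalize v^2 = V at habt; generalize m^2 = M at habt
      omega
    · -- o o e : contradiction
      exfalso
      have e1 : a^2 = 4*u^2 + 4*u + 1 := by rw [hu]; ring
      have e2 : b^2 = 4*v^2 + 4*v + 1 := by rw [hv]; ring
      have e3 : t^2 = 4*m^2 := by rw [hm']; ring
      rw [e1, e2, e3] at habt
      generalize u^2 = U at habt; generalize v^2 = V at habt; generalize m^2 = M at habt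
      omega
    · -- o o o : contradiction (N ≡ 5 mod 8 can't be sum of three odd squares: 3 mod 4)
      exfalso
      have e1 : a^2 = 4*u^2 + 4*u + 1 := by rw [hu]; ring
      have e2 : b^2 = 4*v^2 + 4*v + 1 := by rw [hv]; ring
      have e3 : t^2 = 4*m^2 + 4*m + 1 := by rw [hm']; ring
      rw [e1, e2, e3] at habt
      generalize u^2 = U at habt; generalize v^2 = V at habt; generalize m^2 = M at habt
      omega
  · -- w = 1 branch, N = 2n - 7, n ≥ 4
    have hn4 : 4 ≤ n := by omega
    have hN2 : (2*n-7) % 2 = 1 := by omega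
    have hN8 : (2*n-7) % 8 ≠ 7 := by omega
    obtain ⟨a, b, t, habt⟩ := three_squares (2*n-7) hN2 hN8
    have hcast : ((2*n-7 : ℕ) : ℤ) = 2*(n:ℤ) - 7 := by push_cast [Nat.cast_sub (by omega : 7 ≤ 2*n)]; ring
    rw [hcast] at habt
    rcases Int.even_or_odd a with ⟨u, hu⟩ | ⟨u, hu⟩ <;>
      rcases Int.even_or_odd b with ⟨v, hv⟩ | ⟨v, hv⟩ <;>
      rcases Int.even_or_odd t with ⟨m, hm'⟩ | ⟨m, hm'⟩
    · -- e e e : contradiction (sum even, RHS odd)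
      exfalso
      have e1 : a^2 = 4*u^2 := by rw [hu]; ring
      have e2 : b^2 = 4*v^2 := by rw [hv]; ring
      have e3 : t^2 = 4*m^2 := by rw [hm']; ring
      rw [e1, e2, e3] at habt
      generalize u^2 = U at habt; generalize v^2 = V at habt; generalize m^2 = M at habt
      omega
    · -- e e o : a,b even, t odd
      exact branch_w1 n a b t (u+v) (u-v) m
        (by rw [hu, hv]; ring) (by rw [hu, hv]; ring) hm' habt
    · -- e o e : a,t even, b odd
      exact branch_w1 n a t b (u+m) (u-m) v
        (by rw [hu, hm']; ring) (by rw [hu, hm']; ring) hv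
        (by linarith)
    · -- e o o : contradiction
      exfalso
      have e1 : a^2 = 4*u^2 := by rw [hu]; ring
      have e2 : b^2 = 4*v^2 + 4*v + 1 := by rw [hv]; ring
      have e3 : t^2 = 4*m^2 + 4*m + 1 := by rw [hm']; ring
      rw [e1, e2, e3] at habt
      generalize u^2 = U at habt; generalize v^2 = V at habt; generalize m^2 = M at habt
      omega
    · -- o e e : a odd, b,t even
      exact branch_w1 n b t a (v+m) (v-m) u
        (by rw [hv, hm']; ring) (by rw [hv, hm']; ring) hu
        (by linarith)
    · -- o e o : contradiction
      exfalso
      have e1 : a^2 = 4*u^2 + 4*u + 1 := by rw [hu]; ring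
      have e2 : b^2 = 4*v^2 := by rw [hv]; ring
      have e3 : t^2 = 4*m^2 + 4*m + 1 := by rw [hm']; ring
      rw [e1, e2, e3] at habt
      generalize u^2 = U at habt; generalize v^2 = V at habt; generalize m^2 = M at habt
      omega
    · -- o o e : contradiction
      exfalso
      have e1 : a^2 = 4*u^2 + 4*u + 1 := by rw [hu]; ring
      have e2 : b^2 = 4*v^2 + 4*v + 1 := by rw [hv]; ring
      have e3 : t^2 = 4*m^2 := by rw [hm']; ring
      rw [e1, e2, e3] at habt
      generalize u^2 = U at habt; generalize v^2 = V at habt; generalize m^2 = M at habt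
      omega
    · -- o o o : all odd
      exact branch_w1 n a b t (u+v+1) (u-v) m
        (by rw [hu, hv]; ring) (by rw [hu, hv]; ring) hm' habt
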